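/- Let (W,S) be a Coxeter system with distinguished generator s_0. Let T̂ be the set of reflections in W that are conjugate to some s ∈ S \ {s_0}. Then the inclusion T̂ ⊆ T (the set of all reflections) is proper if and only if s_0 is evenly-laced, i.e., m_{0i} is even (or infinite) for all i ≥ 1. -/

import Mathlib

open CoxeterSystem

namespace AltCox

variable {W : Type*} [Group W]

/-- Word length of `w` with respect to a generating set `A`:
the minimum length of a word in `A` whose product is `w`. -/
noncomputable def glen (A : Set W) (w : W) : ℕ :=
  sInf {k | ∃ l : List W, (∀ x ∈ l, x ∈ A) ∧ l.prod = w ∧ l.length = k}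

variable {n : ℕ} {M : CoxeterMatrix (Fin (n + 1))} (cs : CoxeterSystem M W)

/-- The alternating subgroup `W⁺`: the kernel of the sign character, i.e. the
set of elements of even Coxeter length. -/
def alt : Subgroup W where
  carrier := {w | Even (cs.length w)}
  one_mem' := by simp [Nat.even_iff]
  mul_mem' := by
    intro a b ha hb
    simp only [Set.mem_setOf_eq, Nat.even_iff] at *
    have := cs.length_mul_mod_two a b
    omega
  inv_mem' := by
    intro a ha
    simpa [cs.length_inv] using ha

/-- The generating set `R = {r_i = s₀ sᵢ : i ≠ 0}` of `W⁺`. -/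
def Rset : Set W := {x | ∃ i : Fin (n + 1), i ≠ 0 ∧ x = cs.simple 0 * cs.simple i}

/-- The symmetrized generating set `R ∪ R⁻¹`. -/
def Rsym : Set W := Rset cs ∪ (Rset cs)⁻¹

/-- `ν w`: the minimum number of letters different from `s₀` among all words
in the simple reflections whose product is `w`. -/
noncomputable def nu (w : W) : ℕ :=
  sInf {k | ∃ ω : List (Fin (n + 1)), cs.wordProd ω = w ∧
    (ω.filter (fun i => i ≠ 0)).length = k}

/-- `τ w` is the unique element of `{w, w s₀}` lying in `W⁺`. -/
noncomputable def tau (w : W) : W :=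
  if Even (cs.length w) then w else w * cs.simple 0

/-- `s₀` is evenly laced: `m₀ᵢ` is even or infinite (encoded by `0`) for all `i ≠ 0`. -/
def EvenlyLaced (M : CoxeterMatrix (Fin (n + 1))) : Prop :=
  ∀ i : Fin (n + 1), i ≠ 0 → Even (M 0 i)

/-- The set of all reflections of `(W, S)`. -/
def Tall : Set W := {t | cs.IsReflection t}

/-- The set `T̂` of reflections conjugate to some simple reflection other than `s₀`. -/
def That : Set W := {t | ∃ w : W, ∃ i : Fin (n + 1), i ≠ 0 ∧ t = w * cs.simple i * w⁻¹}

/-- The set of odd palindromes of `W⁺` with respect to `R`. -/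
def Palin : Set W :=
  {p | ∃ l : List W, (∀ x ∈ l, x ∈ Rsym cs) ∧ Odd l.length ∧ l.reverse = l ∧ l.prod = p}

/-- The set of left-shortening palindromes of `w`. -/
noncomputable def PL (w : W) : Set W :=
  {p ∈ Palin cs | glen (Rsym cs) (p * w) < glen (Rsym cs) w}

/-- The set of right-shortening palindromes of `w`. -/
noncomputable def PR (w : W) : Set W :=
  {p ∈ Palin cs | glen (Rsym cs) (w * p) < glen (Rsym cs) w}

/-- The right weak order on `(W⁺, R)`. -/
noncomputable def rweak (u w : W) : Prop :=
  Relation.ReflTransGen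
    (fun a b => ∃ r ∈ Rsym cs, b = a * r ∧
      glen (Rsym cs) b = glen (Rsym cs) a + 1) u w

/-- The left weak order on `(W⁺, R)`. -/
noncomputable def lweak (u w : W) : Prop :=
  Relation.ReflTransGen
    (fun a b => ∃ r ∈ Rsym cs, b = r * a ∧
      glen (Rsym cs) b = glen (Rsym cs) a + 1) u w

/-- The right strong order on `(W⁺, R)`. -/
noncomputable def rstrong (u w : W) : Prop :=
  Relation.ReflTransGen
    (fun a b => ∃ p ∈ Palin cs, b = a * p ∧
      glen (Rsym cs) a < glen (Rsym cs) b) u w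

/-- The left strong order on `(W⁺, R)`. -/
noncomputable def lstrong (u w : W) : Prop :=
  Relation.ReflTransGen
    (fun a b => ∃ p ∈ Palin cs, b = p * a ∧
      glen (Rsym cs) a < glen (Rsym cs) b) u w

/-- The strong Bruhat order on a Coxeter system. -/
noncomputable def bruhatLE {B : Type*} {M' : CoxeterMatrix B} {W' : Type*} [Group W']
    (cs' : CoxeterSystem M' W') (u w : W') : Prop :=
  Relation.ReflTransGen
    (fun a b => ∃ t, cs'.IsReflection t ∧ b = a * t ∧ cs'.length a < cs'.length b) u w

/-- The right weak order of a Coxeter system. -/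
noncomputable def coxRweak {B : Type*} {M' : CoxeterMatrix B} {W' : Type*} [Group W']
    (cs' : CoxeterSystem M' W') (u w : W') : Prop :=
  Relation.ReflTransGen
    (fun a b => ∃ i, b = a * cs'.simple i ∧ cs'.length b = cs'.length a + 1) u w

/-- The standard parabolic subgroup `W_J` for `J ⊆ S`. -/
def parabolic (J : Set (Fin (n + 1))) : Subgroup W :=
  Subgroup.closure (cs.simple '' J)

/-- The image `τ(J) = {s₀ sᵢ : sᵢ ∈ J, i ≠ 0}` of a subset `J ⊆ S` containing `s₀`. -/
def tauSet (J : Set (Fin (n + 1))) : Set W :=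
  {x | ∃ i ∈ J, i ≠ 0 ∧ x = cs.simple 0 * cs.simple i}

/-- The set `W^J` of minimum-length coset representatives for `W/W_J`. -/
def minReps (J : Set (Fin (n + 1))) : Set W :=
  {w | ∀ i ∈ J, cs.length w < cs.length (w * cs.simple i)}


/-- The inclusion `T̂ ⊆ T` of the reflections conjugate to some simple
reflection other than `s₀` into the set of all reflections is proper if and
only if `s₀` is evenly laced. -/
theorem statement8 : That cs ⊂ Tall cs ↔ EvenlyLaced M := by
  constructor
  · -- contrapositive: odd m₀ᵢ ⇒ Tall ⊆ That
    intro hss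
    by_contra h
    unfold EvenlyLaced at h
    push_neg at h
    obtain ⟨i, hi0, hodd⟩ := h
    rw [Nat.not_even_iff_odd] at hodd
    obtain ⟨k, hk⟩ := hodd
    set a := cs.simple 0 with ha
    set b := cs.simple i with hb
    have hp : (a * b) ^ (2 * k + 1) = 1 := by
      rw [ha, hb, ← hk]; exact cs.simple_mul_simple_pow 0 i
    have hsc : SemiconjBy b ((a*b)^k) ((b*a)^k) := (SemiconjBy.pow_right (by
      unfold SemiconjBy; group) k)
    have hinv : ((b*a)^k)⁻¹ = (a*b)^k := by
      rw [← inv_pow, mul_inv_rev, ha, hb, cs.inv_simple, cs.inv_simple]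
    have key : (b*a)^k * b * ((b*a)^k)⁻¹ = a := by
      rw [hinv, ← hsc.eq]
      have h2 : (a*b)^k * (a*b)^k = (a*b)^(2*k+1) * (a*b)⁻¹ := by
        rw [← pow_add, ← two_mul, pow_succ, mul_inv_cancel_right]
      rw [mul_assoc, h2, hp, one_mul, mul_inv_rev, ha, hb, cs.inv_simple, cs.inv_simple,
        ← mul_assoc, cs.simple_mul_simple_self, one_mul]
    -- hence Tall ⊆ That, contradicting ssubset
    apply hss.2
    rintro t ⟨w, j, rfl⟩
    by_cases hj : j = 0
    · subst hj
      refine ⟨w * (b*a)^k, i, hi0, ?_⟩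
      have : w * cs.simple 0 * w⁻¹ = w * ((b*a)^k * b * ((b*a)^k)⁻¹) * w⁻¹ := by
        rw [key]
      rw [this, ← hb]; group
    · exact ⟨w, j, hj, rfl⟩
  · intro hev
    -- homomorphism to ℤˣ
    have hf : M.IsLiftable (fun j : Fin (n+1) => if j = 0 then (-1 : ℤˣ) else 1) := by
      intro j j'
      by_cases hj : j = 0 <;> by_cases hj' : j' = 0 <;> simp [hj, hj']
      · exact (hev j' hj').neg_one_pow
      · subst hj'
        have : M j 0 = M 0 j := M.symmetric j 0
        rw [this]
        exact (hev j hj).neg_one_pow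
    set φ := cs.lift ⟨_, hf⟩ with hφ
    have hφ0 : φ (cs.simple 0) = -1 := by
      rw [hφ, cs.lift_apply_simple]; simp
    have hφi : ∀ j : Fin (n+1), j ≠ 0 → φ (cs.simple j) = 1 := by
      intro j hj
      rw [hφ, cs.lift_apply_simple]; simp [hj]
    constructor
    · rintro t ⟨w, j, hj, rfl⟩
      exact (cs.isReflection_simple j).conj w
    · intro hsub
      have hs0 : cs.simple 0 ∈ That cs := hsub (cs.isReflection_simple 0)
      obtain ⟨w, j, hj, heq⟩ := hs0
      have : φ (cs.simple 0) = φ (w * cs.simple j * w⁻¹) := by rw [heq]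
      rw [hφ0, map_mul, map_mul, hφi j hj, map_inv] at this
      simp at this


end AltCox
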